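/- arXiv:1401.6443 — 2 statements merged into one kernel-verified Lean document; each statement's English description precedes it below -/
import Mathlib

section
/- For α ∈ (0,1) and β = 1 − 2α, the function U = h^{2α}, with h(t,z) = r^{1/2} cos(θ/2), satisfies ΔU + β U_z / z = 0 on ℝ² minus the closed negative t-axis (away from z = 0). Equivalently, div(|z|^β ∇U) = 0 there. -/
noncomputable def hh (t z : ℝ) : ℝ :=
  Real.sqrt (Real.sqrt (t ^ 2 + z ^ 2)) * Real.cos (Complex.arg (t + z * Complex.I) / 2)

/-- `U = h^{2α}` (which vanishes on the closed negative `t`-axis). -/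
noncomputable def UU (α t z : ℝ) : ℝ := hh t z ^ (2 * α)

noncomputable def dT (f : ℝ → ℝ → ℝ) (t z : ℝ) : ℝ := deriv (fun s => f s z) t
noncomputable def dZ (f : ℝ → ℝ → ℝ) (t z : ℝ) : ℝ := deriv (fun s => f t s) z

private lemma abs_lt_sqrt (a b : ℝ) (hb : b ≠ 0) : |a| < Real.sqrt (a ^ 2 + b ^ 2) := by
  rw [← Real.sqrt_sq_eq_abs]
  exact Real.sqrt_lt_sqrt (sq_nonneg a) (by nlinarith [sq_nonneg b, sq_abs b, abs_pos.2 hb])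

private lemma key_pos (a b : ℝ) (hb : b ≠ 0) : 0 < Real.sqrt (a ^ 2 + b ^ 2) + a := by
  have h := abs_lt_sqrt a b hb
  have := neg_abs_le a
  linarith

private lemma hh_eq (t z : ℝ) :
    hh t z = Real.sqrt ((Real.sqrt (t ^ 2 + z ^ 2) + t) / 2) := by
  unfold hh
  by_cases h0 : t = 0 ∧ z = 0
  · obtain ⟨ht, hz⟩ := h0
    simp [ht, hz]
  have hr0 : (0:ℝ) < t ^ 2 + z ^ 2 := by
    rcases not_and_or.1 h0 with h | h <;> positivity
  have hR : (0:ℝ) < Real.sqrt (t ^ 2 + z ^ 2) := Real.sqrt_pos.2 hr0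
  have hw : (t + z * Complex.I : ℂ) ≠ 0 := by
    intro hc
    have h1 : ((t : ℂ) + z * Complex.I).re = 0 := by rw [hc]; simp
    have h2 : ((t : ℂ) + z * Complex.I).im = 0 := by rw [hc]; simp
    simp at h1 h2
    exact absurd ⟨h1, h2⟩ h0
  have habs : ‖(t + z * Complex.I : ℂ)‖ = Real.sqrt (t ^ 2 + z ^ 2) := by
    rw [Complex.norm_def, Complex.normSq_apply]
    simp
    ring_nf
  have hcos : Real.cos (Complex.arg (t + z * Complex.I))
      = t / Real.sqrt (t ^ 2 + z ^ 2) := by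
    rw [Complex.cos_arg hw, habs]
    simp
  rw [Real.cos_half (by linarith [Complex.neg_pi_lt_arg (t + z * Complex.I)])
      (Complex.arg_le_pi _), hcos, ← Real.sqrt_mul (Real.sqrt_nonneg _)]
  congr 1
  field_simp

private lemma UU_eq (α t z : ℝ) :
    UU α t z = ((Real.sqrt (t ^ 2 + z ^ 2) + t) / 2) ^ α := by
  have habs : |t| ≤ Real.sqrt (t ^ 2 + z ^ 2) := by
    rw [← Real.sqrt_sq_eq_abs]
    exact Real.sqrt_le_sqrt (by nlinarith [sq_nonneg z])
  have hx : (0:ℝ) ≤ (Real.sqrt (t ^ 2 + z ^ 2) + t) / 2 := by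
    have := neg_abs_le t; linarith
  rw [UU, hh_eq, Real.sqrt_eq_rpow, ← Real.rpow_mul hx]
  congr 1
  ring

/-- derivative in the first variable of `s ↦ ((√(s²+z²)+s)/2)^a`. -/
private lemma hasDerivAt_V (a z t : ℝ) (hz : z ≠ 0) :
    HasDerivAt (fun s => ((Real.sqrt (s ^ 2 + z ^ 2) + s) / 2) ^ a)
      (a * ((Real.sqrt (t ^ 2 + z ^ 2) + t) / 2) ^ (a - 1)
        * ((t / Real.sqrt (t ^ 2 + z ^ 2) + 1) / 2)) t := by
  have hr0 : (0:ℝ) < t ^ 2 + z ^ 2 := by positivity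
  have hR : (0:ℝ) < Real.sqrt (t ^ 2 + z ^ 2) := Real.sqrt_pos.2 hr0
  have h1 : HasDerivAt (fun s : ℝ => s ^ 2 + z ^ 2) (2 * t) t := by
    simpa using (hasDerivAt_pow 2 t).add_const (z ^ 2)
  have h2 : HasDerivAt (fun s => Real.sqrt (s ^ 2 + z ^ 2))
      (t / Real.sqrt (t ^ 2 + z ^ 2)) t := by
    have := h1.sqrt (ne_of_gt hr0)
    convert this using 1
    field_simp
  have h3 : HasDerivAt (fun s => (Real.sqrt (s ^ 2 + z ^ 2) + s) / 2)
      ((t / Real.sqrt (t ^ 2 + z ^ 2) + 1) / 2) t :=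
    (h2.add (hasDerivAt_id t)).div_const 2
  have := h3.rpow_const (p := a) (Or.inl (ne_of_gt (by linarith [key_pos t z hz])))
  convert this using 1
  ring

/-- derivative in the second variable of `s ↦ ((√(t²+s²)+t)/2)^a`. -/
private lemma hasDerivAt_Vz (a t z : ℝ) (hz : z ≠ 0) :
    HasDerivAt (fun s => ((Real.sqrt (t ^ 2 + s ^ 2) + t) / 2) ^ a)
      (a * ((Real.sqrt (t ^ 2 + z ^ 2) + t) / 2) ^ (a - 1)
        * (z / Real.sqrt (t ^ 2 + z ^ 2) / 2)) z := by
  have hr0 : (0:ℝ) < t ^ 2 + z ^ 2 := by positivity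
  have hR : (0:ℝ) < Real.sqrt (t ^ 2 + z ^ 2) := Real.sqrt_pos.2 hr0
  have h1 : HasDerivAt (fun s : ℝ => t ^ 2 + s ^ 2) (2 * z) z := by
    simpa using (hasDerivAt_pow 2 z).const_add (t ^ 2)
  have h2 : HasDerivAt (fun s => Real.sqrt (t ^ 2 + s ^ 2))
      (z / Real.sqrt (t ^ 2 + z ^ 2)) z := by
    have := h1.sqrt (ne_of_gt hr0)
    convert this using 1
    field_simp
  have h3 : HasDerivAt (fun s => (Real.sqrt (t ^ 2 + s ^ 2) + t) / 2)
      (z / Real.sqrt (t ^ 2 + z ^ 2) / 2) z :=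
    (h2.add_const t).div_const 2
  have := h3.rpow_const (p := a) (Or.inl (ne_of_gt (by linarith [key_pos t z hz])))
  convert this using 1
  ring

/-- `ΔU + β U_z/z = 0` off the closed negative `t`-axis, away from `z = 0`. -/
theorem stmt_2 (α β : ℝ) (hα : α ∈ Set.Ioo (0 : ℝ) 1) (hβ : β = 1 - 2 * α)
    (t z : ℝ) (hz : z ≠ 0) :
    dT (dT (UU α)) t z + dZ (dZ (UU α)) t z + β * dZ (UU α) t z / z = 0 := by
  have hr0 : (0:ℝ) < t ^ 2 + z ^ 2 := by positivity
  have hR : (0:ℝ) < Real.sqrt (t ^ 2 + z ^ 2) := Real.sqrt_pos.2 hr0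
  set R := Real.sqrt (t ^ 2 + z ^ 2) with hRdef
  have hR2 : R ^ 2 = t ^ 2 + z ^ 2 := Real.sq_sqrt hr0.le
  have hpt : 0 < R + t := key_pos t z hz
  have hUV : ∀ t' z', UU α t' z' = ((Real.sqrt (t' ^ 2 + z' ^ 2) + t') / 2) ^ α := UU_eq α
  -- first derivative in t, valid at every point (z fixed, nonzero)
  have hdT : ∀ s, dT (UU α) s z
      = α * ((Real.sqrt (s ^ 2 + z ^ 2) + s) / 2) ^ (α - 1)
          * ((s / Real.sqrt (s ^ 2 + z ^ 2) + 1) / 2) := by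
    intro s
    rw [dT]
    have he : (fun u => UU α u z) = fun u => ((Real.sqrt (u ^ 2 + z ^ 2) + u) / 2) ^ α :=
      funext fun u => hUV u z
    rw [he, (hasDerivAt_V α z s hz).deriv]
  have hdZfun : ∀ t' z', z' ≠ 0 → dZ (UU α) t' z'
      = α * ((Real.sqrt (t' ^ 2 + z' ^ 2) + t') / 2) ^ (α - 1)
          * (z' / Real.sqrt (t' ^ 2 + z' ^ 2) / 2) := by
    intro t' z' hz'
    rw [dZ]
    have he : (fun u => UU α t' u) = fun u => ((Real.sqrt (t' ^ 2 + u ^ 2) + t') / 2) ^ α :=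
      funext fun u => hUV t' u
    rw [he, (hasDerivAt_Vz α t' z' hz').deriv]
  -- derivative of the sqrt in each slot
  have hsT : HasDerivAt (fun s => Real.sqrt (s ^ 2 + z ^ 2)) (t / R) t := by
    have h1 : HasDerivAt (fun s : ℝ => s ^ 2 + z ^ 2) (2 * t) t := by
      simpa using (hasDerivAt_pow 2 t).add_const (z ^ 2)
    have := h1.sqrt (ne_of_gt hr0)
    convert this using 1
    rw [hRdef]; field_simp
  have hsZ : HasDerivAt (fun s => Real.sqrt (t ^ 2 + s ^ 2)) (z / R) z := by
    have h1 : HasDerivAt (fun s : ℝ => t ^ 2 + s ^ 2) (2 * z) z := by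
      simpa using (hasDerivAt_pow 2 z).const_add (t ^ 2)
    have := h1.sqrt (ne_of_gt hr0)
    convert this using 1
    rw [hRdef]; field_simp
  -- derivative of the second factors
  have hq : HasDerivAt (fun s => (s / Real.sqrt (s ^ 2 + z ^ 2) + 1) / 2)
      (z ^ 2 / R ^ 3 / 2) t := by
    have h3 := (((hasDerivAt_id t).div hsT (ne_of_gt hR)).add_const (1:ℝ)).div_const 2
    refine h3.congr_deriv ?_
    simp only [id]; rw [← hRdef]
    field_simp
    linear_combination hR2
  have hq2 : HasDerivAt (fun s => s / Real.sqrt (t ^ 2 + s ^ 2) / 2)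
      (t ^ 2 / R ^ 3 / 2) z := by
    have h3 := ((hasDerivAt_id z).div hsZ (ne_of_gt hR)).div_const 2
    refine h3.congr_deriv ?_
    simp only [id]; rw [← hRdef]
    field_simp
    linear_combination hR2
  -- second derivative in t
  have htt : dT (dT (UU α)) t z
      = α * ((α - 1) * ((R + t) / 2) ^ (α - 1 - 1) * ((t / R + 1) / 2) * ((t / R + 1) / 2)
          + ((R + t) / 2) ^ (α - 1) * (z ^ 2 / R ^ 3 / 2)) := by
    rw [dT]
    have he : (fun s => dT (UU α) s z) = fun s =>
        α * (((Real.sqrt (s ^ 2 + z ^ 2) + s) / 2) ^ (α - 1)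
          * ((s / Real.sqrt (s ^ 2 + z ^ 2) + 1) / 2)) := by
      funext s; rw [hdT s]; ring
    rw [he]
    exact (((hasDerivAt_V (α - 1) z t hz).mul hq).const_mul α).deriv
  -- second derivative in z
  have hzz : dZ (dZ (UU α)) t z
      = α * ((α - 1) * ((R + t) / 2) ^ (α - 1 - 1) * (z / R / 2) * (z / R / 2)
          + ((R + t) / 2) ^ (α - 1) * (t ^ 2 / R ^ 3 / 2)) := by
    rw [dZ]
    have hev : (fun s => dZ (UU α) t s) =ᶠ[nhds z] fun s =>
        α * (((Real.sqrt (t ^ 2 + s ^ 2) + t) / 2) ^ (α - 1)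
          * (s / Real.sqrt (t ^ 2 + s ^ 2) / 2)) := by
      filter_upwards [eventually_ne_nhds hz] with s hs
      rw [hdZfun t s hs]; ring
    rw [hev.deriv_eq]
    exact (((hasDerivAt_Vz (α - 1) t z hz).mul hq2).const_mul α).deriv
  rw [htt, hzz, hdZfun t z hz, hβ]
  have hp2 : (0:ℝ) < (R + t) / 2 := by linarith
  have hprel : ((R + t) / 2 : ℝ) ^ (α - 1)
      = ((R + t) / 2) ^ (α - 1 - 1) * ((R + t) / 2) := by
    nth_rewrite 1 [show α - 1 = (α - 1 - 1) + 1 by ring]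
    rw [Real.rpow_add hp2, Real.rpow_one]
  rw [hprel]
  set P : ℝ := ((R + t) / 2) ^ (α - 1 - 1) with hPdef
  field_simp
  rw [← hRdef]
  ring_nf
  linear_combination (-α * P * R * (α * R + t)) * hR2
end

section
/- U is globally Hölder continuous of exponent α on ℝ²: there is C > 0 with |U(t₁,z₁) − U(t₂,z₂)| ≤ C |(t₁,z₁) − (t₂,z₂)|^α for all points of ℝ². -/
lemma hh_nonneg (t z : ℝ) : 0 ≤ hh t z := by
  apply mul_nonneg (Real.sqrt_nonneg _)
  apply Real.cos_nonneg_of_mem_Icc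
  constructor
  · linarith [Complex.neg_pi_lt_arg (t + z * Complex.I), Real.pi_pos]
  · linarith [Complex.arg_le_pi (t + z * Complex.I), Real.pi_pos]

lemma cabs_eq (t z : ℝ) : ‖(t : ℂ) + z * Complex.I‖ = Real.sqrt (t ^ 2 + z ^ 2) := by
  rw [Complex.norm_def, Complex.normSq_apply]
  norm_num [Complex.add_re, Complex.add_im]
  ring_nf

lemma hh_sq (t z : ℝ) : hh t z ^ (2:ℕ) = (Real.sqrt (t ^ 2 + z ^ 2) + t) / 2 := by
  by_cases h : (t : ℂ) + z * Complex.I = 0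
  · have ht : t = 0 := by
      have := congrArg Complex.re h; simpa using this
    have hz : z = 0 := by
      have := congrArg Complex.im h; simpa using this
    simp [hh, ht, hz]
  · have hc : Real.cos (Complex.arg (t + z * Complex.I)) =
        t / Real.sqrt (t ^ 2 + z ^ 2) := by
      rw [Complex.cos_arg h]
      simp [cabs_eq]
    have hr : (0:ℝ) ≤ t ^ 2 + z ^ 2 := by positivity
    have hrpos : 0 < Real.sqrt (t ^ 2 + z ^ 2) := by
      rw [← cabs_eq]; exact (norm_pos_iff.mpr h)
    have hcos2 : Real.cos (Complex.arg (t + z * Complex.I) / 2) ^ 2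
        = 1 / 2 + Real.cos (Complex.arg (t + z * Complex.I)) / 2 := by
      rw [show Complex.arg (t + z * Complex.I) = 2 * (Complex.arg (t + z * Complex.I) / 2) by ring,
        Real.cos_two_mul]
      ring
    rw [hh, mul_pow, Real.sq_sqrt (Real.sqrt_nonneg _), hcos2, hc]
    field_simp

lemma real_rpow_add_le (a b p : ℝ) (ha : 0 ≤ a) (hb : 0 ≤ b) (hp : 0 ≤ p) (hp1 : p ≤ 1) :
    (a + b) ^ p ≤ a ^ p + b ^ p := by
  lift a to NNReal using ha
  lift b to NNReal using hb
  have := NNReal.rpow_add_le_add_rpow a b hp hp1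
  exact_mod_cast this

lemma rpow_holder {a b p : ℝ} (ha : 0 ≤ a) (hb : 0 ≤ b) (hp : 0 ≤ p) (hp1 : p ≤ 1) :
    |a ^ p - b ^ p| ≤ |a - b| ^ p := by
  wlog hab : b ≤ a generalizing a b
  · rw [abs_sub_comm, abs_sub_comm a b]; exact this hb ha (le_of_not_ge hab)
  have h1 : a ^ p ≤ (a - b) ^ p + b ^ p := by
    calc a ^ p = ((a - b) + b) ^ p := by ring_nf
    _ ≤ (a - b) ^ p + b ^ p := real_rpow_add_le _ _ _ (by linarith) hb hp hp1
  have h2 : b ^ p ≤ a ^ p := Real.rpow_le_rpow hb hab hp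
  rw [abs_of_nonneg (by linarith), abs_of_nonneg (by linarith)]
  linarith

/-- `U` is globally Hölder continuous of exponent `α` on `ℝ²`. -/
theorem stmt_7 (α : ℝ) (hα : α ∈ Set.Ioo (0 : ℝ) 1) :
    ∃ C > 0, ∀ t₁ z₁ t₂ z₂ : ℝ,
      |UU α t₁ z₁ - UU α t₂ z₂|
        ≤ C * Real.sqrt ((t₁ - t₂) ^ 2 + (z₁ - z₂) ^ 2) ^ α := by
  obtain ⟨hα0, hα1⟩ := hα
  refine ⟨1, one_pos, fun t₁ z₁ t₂ z₂ => ?_⟩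
  set d := Real.sqrt ((t₁ - t₂) ^ 2 + (z₁ - z₂) ^ 2) with hd
  have hd0 : 0 ≤ d := Real.sqrt_nonneg _
  -- rewrite UU as (hh^2)^α
  have hU : ∀ t z : ℝ, UU α t z = (hh t z ^ (2:ℕ)) ^ α := by
    intro t z
    rw [UU, ← Real.rpow_natCast_mul (hh_nonneg t z) 2 α]
    norm_num
  rw [hU, hU, one_mul]
  have key : |hh t₁ z₁ ^ (2:ℕ) - hh t₂ z₂ ^ (2:ℕ)| ≤ d := by
    rw [hh_sq, hh_sq]
    have hr : |Real.sqrt (t₁ ^ 2 + z₁ ^ 2) - Real.sqrt (t₂ ^ 2 + z₂ ^ 2)| ≤ d := by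
      rw [← cabs_eq, ← cabs_eq]
      have := abs_norm_sub_norm_le ((t₁:ℂ) + z₁ * Complex.I)
        ((t₂:ℂ) + z₂ * Complex.I)
      calc |‖(↑t₁ + ↑z₁ * Complex.I : ℂ)‖ - ‖(↑t₂ + ↑z₂ * Complex.I : ℂ)‖|
          ≤ ‖(↑t₁ + ↑z₁ * Complex.I : ℂ) - (↑t₂ + ↑z₂ * Complex.I)‖ := this
        _ = d := by
            rw [show ((t₁:ℂ) + z₁ * Complex.I) - ((t₂:ℂ) + z₂ * Complex.I)
              = ((t₁ - t₂ : ℝ):ℂ) + ((z₁ - z₂ : ℝ):ℂ) * Complex.I by push_cast; ring,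
              cabs_eq]
    have ht : |t₁ - t₂| ≤ d := by
      rw [hd, ← Real.sqrt_sq_eq_abs]
      exact Real.sqrt_le_sqrt (by nlinarith [sq_nonneg (z₁ - z₂)])
    calc |(Real.sqrt (t₁ ^ 2 + z₁ ^ 2) + t₁) / 2 - (Real.sqrt (t₂ ^ 2 + z₂ ^ 2) + t₂) / 2|
        ≤ (|Real.sqrt (t₁ ^ 2 + z₁ ^ 2) - Real.sqrt (t₂ ^ 2 + z₂ ^ 2)| + |t₁ - t₂|) / 2 := by
          rw [show (Real.sqrt (t₁ ^ 2 + z₁ ^ 2) + t₁) / 2 - (Real.sqrt (t₂ ^ 2 + z₂ ^ 2) + t₂) / 2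
            = ((Real.sqrt (t₁ ^ 2 + z₁ ^ 2) - Real.sqrt (t₂ ^ 2 + z₂ ^ 2)) + (t₁ - t₂)) / 2 by ring]
          rw [abs_div, abs_two]
          gcongr
          exact abs_add_le _ _
      _ ≤ d := by linarith
  calc |(hh t₁ z₁ ^ (2:ℕ)) ^ α - (hh t₂ z₂ ^ (2:ℕ)) ^ α|
      ≤ |hh t₁ z₁ ^ (2:ℕ) - hh t₂ z₂ ^ (2:ℕ)| ^ α :=
        rpow_holder (by positivity) (by positivity) hα0.le hα1.le
    _ ≤ d ^ α := Real.rpow_le_rpow (abs_nonneg _) key hα0.le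
end
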